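/- arXiv:0706.1765 — 2 statements merged into one kernel-verified Lean document; each statement's English description precedes it below -/
import Mathlib

section
/- With the resonator coefficients f = f_M as defined and g the multiplicative function supported on squarefree integers with g(p) = 1 + f(p)², for every ε > 0 one has Σ_{a ≤ M} Λ(a) f(a)/(√a · g(a)) ≪_ε (log M)^{1/2+ε} as M → ∞, where Λ is the von Mangoldt function. -/
open Filter Finset
open scoped Classical

/-- `L = √(log M · log log M)` for the resonator parameter `M`. -/
noncomputable def resL (M : ℕ) : ℝ := Real.sqrt (Real.log M * Real.log (Real.log M))

/-- The value of the resonator coefficients at a prime `p`: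
`f(p) = L/(√p log p)` if `L² ≤ p ≤ exp((log L)²)`, and `f(p) = 0` otherwise. -/
noncomputable def resFp (M p : ℕ) : ℝ :=
  if resL M ^ 2 ≤ (p : ℝ) ∧ (p : ℝ) ≤ Real.exp (Real.log (resL M) ^ 2) then
    resL M / (Real.sqrt p * Real.log p)
  else 0

/-- The resonator coefficients `f = f_M`: the multiplicative function supported on squarefree
integers determined by its values `resFp` at primes. -/
noncomputable def resF (M n : ℕ) : ℝ :=
  if Squarefree n then ∏ p ∈ n.primeFactors, resFp M p else 0

/-- `Q₁ = Π_p (1 + f(p)² + f(p)/√p)`. -/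
noncomputable def resQ1 (M : ℕ) : ℝ :=
  ∏ᶠ p ∈ {p : ℕ | p.Prime}, (1 + resFp M p ^ 2 + resFp M p / Real.sqrt p)

/-- `Q₂ = Π_p (1 + f(p)²)`. -/
noncomputable def resQ2 (M : ℕ) : ℝ :=
  ∏ᶠ p ∈ {p : ℕ | p.Prime}, (1 + resFp M p ^ 2)

/-- The multiplicative function `g` supported on squarefree integers with `g(p) = 1 + f(p)²`. -/
noncomputable def resG (M n : ℕ) : ℝ :=
  if Squarefree n then ∏ p ∈ n.primeFactors, (1 + resFp M p ^ 2) else 0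

lemma resFp_nonneg (M p : ℕ) : 0 ≤ resFp M p := by
  unfold resFp
  split
  · exact div_nonneg (Real.sqrt_nonneg _)
      (mul_nonneg (Real.sqrt_nonneg _) (Real.log_natCast_nonneg _))
  · exact le_refl 0

lemma resF_nonneg (M n : ℕ) : 0 ≤ resF M n := by
  unfold resF
  split
  · exact Finset.prod_nonneg fun p _ => resFp_nonneg M p
  · exact le_refl 0

lemma resG_nonneg (M n : ℕ) : 0 ≤ resG M n := by
  unfold resG
  split
  · exact Finset.prod_nonneg fun p _ => by positivity
  · exact le_refl 0

lemma res_term_nonneg (M a : ℕ) :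
    0 ≤ ArithmeticFunction.vonMangoldt a * resF M a / (Real.sqrt a * resG M a) :=
  div_nonneg (mul_nonneg ArithmeticFunction.vonMangoldt_nonneg (resF_nonneg M a))
    (mul_nonneg (Real.sqrt_nonneg _) (resG_nonneg M a))

lemma res_term_le (M a : ℕ) :
    ArithmeticFunction.vonMangoldt a * resF M a / (Real.sqrt a * resG M a) ≤
      (if a.Prime ∧ (a : ℝ) ≤ Real.exp (Real.log (resL M) ^ 2) then resL M / (a : ℝ) else 0) := by
  have hL : 0 ≤ resL M := Real.sqrt_nonneg _
  have hR : (0:ℝ) ≤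
      (if a.Prime ∧ (a : ℝ) ≤ Real.exp (Real.log (resL M) ^ 2) then resL M / (a : ℝ) else 0) := by
    split
    · exact div_nonneg hL (Nat.cast_nonneg a)
    · exact le_refl 0
  by_cases hsq : Squarefree a
  · by_cases hpp : IsPrimePow a
    · have hp : a.Prime := Nat.squarefree_and_prime_pow_iff_prime.mp ⟨hsq, hpp⟩
      have hF : resF M a = resFp M a := by
        simp only [resF, if_pos hsq, hp.primeFactors, Finset.prod_singleton]
      have hG : resG M a = 1 + resFp M a ^ 2 := by
        simp only [resG, if_pos hsq, hp.primeFactors, Finset.prod_singleton]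
      rw [hF, hG, ArithmeticFunction.vonMangoldt_apply_prime hp]
      rw [resFp]
      split_ifs with hc hi
      · -- main case
        have ha1 : (1:ℝ) < a := by exact_mod_cast hp.one_lt
        have hs : 0 < Real.sqrt a := Real.sqrt_pos.mpr (by linarith)
        have hl : 0 < Real.log a := Real.log_pos ha1
        have hss : Real.sqrt a * Real.sqrt a = (a:ℝ) := Real.mul_self_sqrt (by positivity)
        have e1 : Real.log a * (resL M / (Real.sqrt a * Real.log a)) = resL M / Real.sqrt a := by
          field_simp
        rw [e1, div_div, ← mul_assoc, hss]
        apply div_le_div_of_nonneg_left hL (by linarith)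
        exact le_mul_of_one_le_right (by linarith)
          (le_add_of_nonneg_right (sq_nonneg _))
      · exact absurd ⟨hp, hc.2⟩ hi
      · rw [mul_zero, zero_div]
        exact div_nonneg hL (Nat.cast_nonneg a)
      · rw [mul_zero, zero_div]
    · have : ArithmeticFunction.vonMangoldt a = 0 := by
        rw [ArithmeticFunction.vonMangoldt_apply, if_neg hpp]
      rw [this, zero_mul, zero_div]
      exact hR
  · have : resF M a = 0 := by simp only [resF, if_neg hsq]
    rw [this, mul_zero, zero_div]
    exact hR

lemma res_sum_bound (M : ℕ) :
    ∑ a ∈ Finset.Icc 1 M,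
        ArithmeticFunction.vonMangoldt a * resF M a / (Real.sqrt a * resG M a)
      ≤ resL M * (1 + Real.log (resL M) ^ 2) := by
  set X := Real.exp (Real.log (resL M) ^ 2) with hXdef
  set N := ⌊X⌋₊ with hNdef
  have hX1 : (1:ℝ) ≤ X := Real.one_le_exp (sq_nonneg _)
  have hN1 : 1 ≤ N := Nat.le_floor (by exact_mod_cast hX1)
  have hL : 0 ≤ resL M := Real.sqrt_nonneg _
  calc ∑ a ∈ Finset.Icc 1 M,
        ArithmeticFunction.vonMangoldt a * resF M a / (Real.sqrt a * resG M a)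
      ≤ ∑ a ∈ Finset.Icc 1 M, (if a.Prime ∧ (a:ℝ) ≤ X then resL M / (a:ℝ) else 0) :=
        Finset.sum_le_sum fun a _ => res_term_le M a
    _ = ∑ a ∈ (Finset.Icc 1 M).filter (fun a : ℕ => a.Prime ∧ (a:ℝ) ≤ X), resL M / (a:ℝ) :=
        (Finset.sum_filter _ _).symm
    _ ≤ ∑ a ∈ Finset.Icc 1 N, resL M / (a:ℝ) := by
        apply Finset.sum_le_sum_of_subset_of_nonneg
        · intro a ha
          simp only [Finset.mem_filter, Finset.mem_Icc] at ha ⊢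
          refine ⟨ha.1.1, Nat.le_floor ha.2.2⟩
        · intro a _ _
          exact div_nonneg hL (Nat.cast_nonneg a)
    _ = resL M * ∑ a ∈ Finset.Icc 1 N, ((a:ℝ))⁻¹ := by
        rw [Finset.mul_sum]
        exact Finset.sum_congr rfl fun a _ => div_eq_mul_inv _ _
    _ ≤ resL M * (1 + Real.log N) := by
        apply mul_le_mul_of_nonneg_left _ hL
        have h1 := harmonic_le_one_add_log N
        rw [harmonic_eq_sum_Icc] at h1
        push_cast at h1
        exact h1
    _ ≤ resL M * (1 + Real.log (resL M) ^ 2) := by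
        apply mul_le_mul_of_nonneg_left _ hL
        have h2 : Real.log N ≤ Real.log X :=
          Real.log_le_log (by exact_mod_cast hN1) (Nat.floor_le (by linarith))
        rw [hXdef, Real.log_exp] at h2
        linarith

lemma res_bound_isBigO (ε : ℝ) (hε : 0 < ε) :
    (fun M : ℕ => resL M * (1 + Real.log (resL M) ^ 2)) =O[atTop]
      fun M : ℕ => Real.log M ^ ((1 : ℝ) / 2 + ε) := by
  have hlog : Tendsto (fun M : ℕ => Real.log M) atTop atTop :=
    Real.tendsto_log_atTop.comp tendsto_natCast_atTop_atTop
  have h1 : (fun x : ℝ => Real.log x ^ (3:ℝ)) =o[atTop] fun x : ℝ => x ^ ε :=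
    isLittleO_log_rpow_rpow_atTop 3 hε
  have h2 : (fun M : ℕ => Real.log (Real.log M) ^ (3:ℝ)) =o[atTop]
      fun M : ℕ => (Real.log M) ^ ε := h1.comp_tendsto hlog
  have h3 : (fun M : ℕ => Real.log M ^ ((1:ℝ)/2) * Real.log (Real.log M) ^ (3:ℝ)) =O[atTop]
      fun M : ℕ => Real.log M ^ ((1:ℝ)/2) * Real.log M ^ ε :=
    (Asymptotics.isBigO_refl _ _).mul h2.isBigO
  have h4 : (fun M : ℕ => Real.log M ^ ((1:ℝ)/2) * Real.log M ^ ε) =ᶠ[atTop]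
      fun M : ℕ => Real.log M ^ ((1:ℝ)/2 + ε) := by
    filter_upwards [hlog.eventually_gt_atTop 0] with M hM
    rw [Real.rpow_add hM]
  have hA : (fun M : ℕ => resL M * (1 + Real.log (resL M) ^ 2)) =O[atTop]
      fun M : ℕ => Real.log M ^ ((1:ℝ)/2) * Real.log (Real.log M) ^ (3:ℝ) := by
    apply Asymptotics.IsBigO.of_bound 2
    filter_upwards [hlog.eventually_ge_atTop (Real.exp 1), hlog.eventually_gt_atTop 1]
      with M hMe hM1
    set u := Real.log M with hu
    have hu0 : 0 < u := lt_trans zero_lt_one hM1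
    have hlu1 : 1 ≤ Real.log u := (Real.le_log_iff_exp_le hu0).mpr hMe
    have hlu0 : 0 < Real.log u := lt_of_lt_of_le zero_lt_one hlu1
    have hLdef : resL M = Real.sqrt (u * Real.log u) := rfl
    have hL0 : 0 < resL M := by
      rw [hLdef]; exact Real.sqrt_pos.mpr (by positivity)
    have hL1 : 1 ≤ resL M := by
      rw [hLdef]
      rw [show (1:ℝ) = Real.sqrt 1 by simp]
      exact Real.sqrt_le_sqrt (by nlinarith)
    have hLu : resL M ≤ u := by
      rw [hLdef]
      calc Real.sqrt (u * Real.log u) ≤ Real.sqrt (u * u) := by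
            apply Real.sqrt_le_sqrt
            have : Real.log u ≤ u := (Real.log_le_sub_one_of_pos hu0).trans (by linarith)
            nlinarith
        _ = u := Real.sqrt_mul_self hu0.le
    have hlogL0 : 0 ≤ Real.log (resL M) := Real.log_nonneg hL1
    have hlogL : Real.log (resL M) ≤ Real.log u := Real.log_le_log hL0 hLu
    have key : resL M * (1 + Real.log (resL M) ^ 2) ≤
        2 * (u ^ ((1:ℝ)/2) * Real.log u ^ (3:ℝ)) := by
      have e1 : resL M = u ^ ((1:ℝ)/2) * (Real.log u) ^ ((1:ℝ)/2) := by
        rw [hLdef, Real.sqrt_eq_rpow, Real.mul_rpow hu0.le hlu0.le]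
      have h5 : 1 + Real.log (resL M) ^ 2 ≤ 2 * Real.log u ^ 2 := by
        have hsq := pow_le_pow_left₀ hlogL0 hlogL 2
        nlinarith
      calc resL M * (1 + Real.log (resL M) ^ 2)
          ≤ resL M * (2 * Real.log u ^ 2) := mul_le_mul_of_nonneg_left h5 hL0.le
        _ = 2 * (u ^ ((1:ℝ)/2) * ((Real.log u) ^ ((1:ℝ)/2) * (Real.log u) ^ ((2:ℕ):ℝ))) := by
            rw [e1, Real.rpow_natCast]; push_cast; ring
        _ ≤ 2 * (u ^ ((1:ℝ)/2) * Real.log u ^ (3:ℝ)) := by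
            rw [← Real.rpow_add hlu0]
            have : ((1:ℝ)/2 + ((2:ℕ):ℝ)) ≤ 3 := by push_cast; norm_num
            have h6 : Real.log u ^ ((1:ℝ)/2 + ((2:ℕ):ℝ)) ≤ Real.log u ^ (3:ℝ) :=
              Real.rpow_le_rpow_of_exponent_le hlu1 this
            have h7 : 0 ≤ u ^ ((1:ℝ)/2) := Real.rpow_nonneg hu0.le _
            nlinarith
    have hg0 : 0 ≤ u ^ ((1:ℝ)/2) * Real.log u ^ (3:ℝ) :=
      mul_nonneg (Real.rpow_nonneg hu0.le _) (Real.rpow_nonneg hlu0.le _)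
    have hf0 : 0 ≤ resL M * (1 + Real.log (resL M) ^ 2) :=
      mul_nonneg hL0.le (by positivity)
    rw [Real.norm_eq_abs, Real.norm_eq_abs, abs_of_nonneg hf0, abs_of_nonneg hg0]
    exact key
  exact (hA.trans h3).congr' EventuallyEq.rfl h4


/-- With the resonator coefficients `f = f_M` as defined and `g` the
multiplicative function supported on squarefree integers with `g(p) = 1 + f(p)²`, for every
`ε > 0` one has `Σ_{a ≤ M} Λ(a) f(a)/(√a g(a)) ≪_ε (log M)^{1/2+ε}` as `M → ∞`. -/
theorem resonator_vonMangoldt_sum (ε : ℝ) (hε : 0 < ε) :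
    (fun M : ℕ =>
        ∑ a ∈ Finset.Icc 1 M,
          ArithmeticFunction.vonMangoldt a * resF M a / (Real.sqrt a * resG M a))
      =O[atTop] fun M : ℕ => Real.log M ^ ((1 : ℝ) / 2 + ε) := by
  refine Asymptotics.IsBigO.trans ?_ (res_bound_isBigO ε hε)
  apply Asymptotics.IsBigO.of_bound 1
  refine Filter.Eventually.of_forall fun M => ?_
  rw [one_mul, Real.norm_eq_abs, Real.norm_eq_abs]
  have h0 : 0 ≤ ∑ a ∈ Finset.Icc 1 M,
      ArithmeticFunction.vonMangoldt a * resF M a / (Real.sqrt a * resG M a) :=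
    Finset.sum_nonneg fun a _ => res_term_nonneg M a
  have h1 := res_sum_bound M
  rw [abs_of_nonneg h0, abs_of_nonneg (le_trans h0 h1)]
  exact h1
end

section
/- With the resonator coefficients f = f_M as defined, for every ε > 0 one has Σ_{nu ≤ M} f(u) f(nu) (log n)/√n ≪_ε Q₁ (log M)^{1/2+ε} as M → ∞, where Q₁ = Π_p (1 + f(p)² + f(p)/√p). -/
open Filter Finset
open scoped Classical

/-- The finite set of primes supporting the resonator coefficients. -/
noncomputable def resP (M : ℕ) : Finset ℕ :=
  (Finset.range (⌈Real.exp (Real.log (resL M) ^ 2)⌉₊ + 1)).filter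
    (fun p => p.Prime ∧ resFp M p ≠ 0)

lemma sqrt_prod_nat (S : Finset ℕ) :
    Real.sqrt (∏ p ∈ S, (p : ℝ)) = ∏ p ∈ S, Real.sqrt (p : ℝ) := by
  induction S using Finset.induction with
  | empty => simp
  | @insert _ _ h ih =>
      rw [Finset.prod_insert h, Finset.prod_insert h,
        Real.sqrt_mul (Nat.cast_nonneg _), ih]

lemma mem_resP {M p : ℕ} : p ∈ resP M ↔ p.Prime ∧ resFp M p ≠ 0 := by
  constructor
  · intro hp
    exact (Finset.mem_filter.1 hp).2
  · intro hp
    refine Finset.mem_filter.2 ⟨Finset.mem_range.2 ?_, hp⟩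
    have h1 : (p : ℝ) ≤ Real.exp (Real.log (resL M) ^ 2) := by
      by_contra hcon
      apply hp.2
      unfold resFp
      rw [if_neg]
      tauto
    have : (p : ℝ) ≤ (⌈Real.exp (Real.log (resL M) ^ 2)⌉₊ : ℝ) :=
      h1.trans (Nat.le_ceil _)
    have := Nat.cast_le.1 this
    omega

lemma resQ1_eq_prod (M : ℕ) :
    resQ1 M = ∏ p ∈ resP M, (1 + resFp M p ^ 2 + resFp M p / Real.sqrt p) := by
  set h : ℕ → ℝ := fun p => 1 + resFp M p ^ 2 + resFp M p / Real.sqrt p with hh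
  have hzero : ∀ p : ℕ, resFp M p = 0 → h p = 1 := by
    intro p hp; simp [hh, hp]
  have hsub : {p : ℕ | p.Prime} ∩ Function.mulSupport h ⊆ ↑(resP M) := by
    intro p hp
    rcases hp with ⟨hp1, hp2⟩
    refine Finset.mem_coe.2 (mem_resP.2 ⟨hp1, ?_⟩)
    intro h0
    exact hp2 (hzero p h0)
  have hfin : ({p : ℕ | p.Prime} ∩ Function.mulSupport h).Finite :=
    Set.Finite.subset (resP M).finite_toSet hsub
  rw [resQ1, finprod_mem_eq_prod h hfin]
  refine Finset.prod_subset ?_ ?_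
  · intro p hp
    have := hfin.mem_toFinset.1 hp
    exact Finset.mem_coe.1 (hsub this)
  · intro p hp hnp
    have hprime : p.Prime := (mem_resP.1 hp).1
    by_contra hne
    exact hnp (hfin.mem_toFinset.2 ⟨hprime, hne⟩)

lemma one_le_resQ1 (M : ℕ) : 1 ≤ resQ1 M := by
  rw [resQ1_eq_prod]
  have : ∀ p ∈ resP M, (1:ℝ) ≤ 1 + resFp M p ^ 2 + resFp M p / Real.sqrt p := by
    intro p _
    have h1 := resFp_nonneg M p
    have h2 : 0 ≤ resFp M p / Real.sqrt p := div_nonneg h1 (Real.sqrt_nonneg _)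
    nlinarith [sq_nonneg (resFp M p)]
  calc (1:ℝ) = ∏ _p ∈ resP M, (1:ℝ) := by simp
  _ ≤ _ := Finset.prod_le_prod (by intro i _; norm_num) this

lemma resonator_main_bound (M : ℕ) :
    ∑ n ∈ Finset.Icc 1 M, ∑ u ∈ Finset.Icc 1 (M / n),
        resF M u * resF M (n * u) * Real.log n / Real.sqrt n
      ≤ resL M * (3 + Real.log (resL M) ^ 2) * resQ1 M := by
  classical
  set a : ℕ → ℝ := fun p => resFp M p with ha
  set b : ℕ → ℝ := fun p => resFp M p / Real.sqrt p with hb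
  set P : Finset ℕ := resP M with hP
  set term : (Σ _ : ℕ, ℕ) → ℝ :=
    fun x => resF M x.2 * resF M (x.1 * x.2) * Real.log x.1 / Real.sqrt x.1 with hterm
  set g : (Σ _ : Finset ℕ, Finset ℕ) → ℝ :=
    fun y => (∏ p ∈ y.2, a p ^ 2) * ((∏ p ∈ y.1, b p) * ∑ p ∈ y.1, Real.log p) with hg
  set Dom : Finset (Σ _ : ℕ, ℕ) :=
    (Finset.Icc 1 M).sigma (fun n => Finset.Icc 1 (M / n)) with hDom
  set Sig : Finset (Σ _ : Finset ℕ, Finset ℕ) :=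
    P.powerset.sigma (fun S => (P \ S).powerset) with hSig
  have hb_nonneg : ∀ p, 0 ≤ b p := fun p =>
    div_nonneg (resFp_nonneg M p) (Real.sqrt_nonneg _)
  have hgnonneg : ∀ y : (Σ _ : Finset ℕ, Finset ℕ), 0 ≤ g y := by
    intro y
    exact mul_nonneg (Finset.prod_nonneg fun p _ => sq_nonneg _)
      (mul_nonneg (Finset.prod_nonneg fun p _ => hb_nonneg p)
        (Finset.sum_nonneg fun p _ => Real.log_natCast_nonneg p))
  have step1 : (∑ n ∈ Finset.Icc 1 M, ∑ u ∈ Finset.Icc 1 (M / n),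
        resF M u * resF M (n * u) * Real.log n / Real.sqrt n) = ∑ x ∈ Dom, term x := by
    rw [hDom, Finset.sum_sigma]
  have keyfacts : ∀ x ∈ Dom.filter (fun x => term x ≠ 0),
      Squarefree x.1 ∧ Squarefree x.2 ∧
      x.1.primeFactors ∈ P.powerset ∧ x.2.primeFactors ∈ (P \ x.1.primeFactors).powerset ∧
      term x = g ⟨x.1.primeFactors, x.2.primeFactors⟩ := by
    rintro ⟨n, u⟩ hx
    rw [Finset.mem_filter] at hx
    obtain ⟨hdom, hne⟩ := hx
    rw [hDom, Finset.mem_sigma] at hdom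
    dsimp only at hdom hne ⊢
    rw [Finset.mem_Icc, Finset.mem_Icc] at hdom
    have hn0 : n ≠ 0 := by omega
    have hu0 : u ≠ 0 := by omega
    have hfu : resF M u ≠ 0 := by
      intro h; apply hne; rw [hterm]; dsimp only; rw [h]; ring
    have hfnu : resF M (n * u) ≠ 0 := by
      intro h; apply hne; rw [hterm]; dsimp only; rw [h]; ring
    have hsqu : Squarefree u := by
      by_contra hc; exact hfu (by simp [resF, hc])
    have hsqnu : Squarefree (n * u) := by
      by_contra hc; exact hfnu (by simp [resF, hc])
    have hsqn : Squarefree n := hsqnu.squarefree_of_dvd (Dvd.intro u rfl)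
    have hcop : n.Coprime u := Nat.coprime_of_squarefree_mul hsqnu
    have hdisj : Disjoint n.primeFactors u.primeFactors :=
      Nat.Coprime.disjoint_primeFactors hcop
    have hpf : (n * u).primeFactors = n.primeFactors ∪ u.primeFactors :=
      Nat.primeFactors_mul hn0 hu0
    have hfnu_eq : resF M (n * u) = ∏ p ∈ n.primeFactors ∪ u.primeFactors, a p := by
      rw [resF, if_pos hsqnu, hpf]
    have hsubP : n.primeFactors ∪ u.primeFactors ⊆ P := by
      intro p hp
      refine mem_resP.2 ⟨?_, ?_⟩
      · rw [← hpf] at hp; exact Nat.prime_of_mem_primeFactors hp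
      · intro h0
        apply hfnu
        rw [hfnu_eq]
        exact Finset.prod_eq_zero hp h0
    have hprime_ne : ∀ p ∈ n.primeFactors, (p : ℝ) ≠ 0 := fun p hp =>
      Nat.cast_ne_zero.2 (Nat.prime_of_mem_primeFactors hp).ne_zero
    have hncast : (n : ℝ) = ∏ p ∈ n.primeFactors, (p : ℝ) := by
      rw [← Nat.cast_prod, Nat.prod_primeFactors_of_squarefree hsqn]
    have hlog : Real.log n = ∑ p ∈ n.primeFactors, Real.log p := by
      rw [hncast, Real.log_prod hprime_ne]
    have hsqrt : Real.sqrt n = ∏ p ∈ n.primeFactors, Real.sqrt p := by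
      rw [hncast, sqrt_prod_nat]
    refine ⟨hsqn, hsqu, ?_, ?_, ?_⟩
    · exact Finset.mem_powerset.2 ((Finset.subset_union_left).trans hsubP)
    · refine Finset.mem_powerset.2 fun p hp => Finset.mem_sdiff.2
        ⟨hsubP (Finset.mem_union_right _ hp), fun hpn => (Finset.disjoint_left.1 hdisj) hpn hp⟩
    · rw [hterm, hg]
      dsimp only
      rw [resF, if_pos hsqu, hfnu_eq, Finset.prod_union hdisj, hlog, hsqrt]
      simp_rw [hb, sq, Finset.prod_mul_distrib, Finset.prod_div_distrib]
      ring
  set e : (Σ _ : ℕ, ℕ) → (Σ _ : Finset ℕ, Finset ℕ) :=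
    fun x => ⟨x.1.primeFactors, x.2.primeFactors⟩ with he
  have hinj : ∀ x ∈ Dom.filter (fun x => term x ≠ 0), ∀ y ∈ Dom.filter (fun x => term x ≠ 0),
      e x = e y → x = y := by
    rintro ⟨n1, u1⟩ hx ⟨n2, u2⟩ hy hxy
    obtain ⟨hsx1, hsx2, -, -, -⟩ := keyfacts _ hx
    obtain ⟨hsy1, hsy2, -, -, -⟩ := keyfacts _ hy
    dsimp only at hsx1 hsx2 hsy1 hsy2
    have h1 : n1.primeFactors = n2.primeFactors := congrArg Sigma.fst hxy
    have h2' : u1.primeFactors = u2.primeFactors :=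
      congrArg (fun z : (Σ _ : Finset ℕ, Finset ℕ) => z.snd) hxy
    have e1 : n1 = n2 := by
      rw [← Nat.prod_primeFactors_of_squarefree hsx1,
        ← Nat.prod_primeFactors_of_squarefree hsy1, h1]
    have e2 : u1 = u2 := by
      rw [← Nat.prod_primeFactors_of_squarefree hsx2,
        ← Nat.prod_primeFactors_of_squarefree hsy2, h2']
    subst e1; subst e2; rfl
  have step3 : ∑ x ∈ Dom.filter (fun x => term x ≠ 0), term x
      = ∑ y ∈ (Dom.filter (fun x => term x ≠ 0)).image e, g y := by
    rw [Finset.sum_image hinj]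
    exact Finset.sum_congr rfl fun x hx => (keyfacts x hx).2.2.2.2
  have step4 : ∑ y ∈ (Dom.filter (fun x => term x ≠ 0)).image e, g y ≤ ∑ y ∈ Sig, g y := by
    apply Finset.sum_le_sum_of_subset_of_nonneg
    · intro y hy
      obtain ⟨x, hx, rfl⟩ := Finset.mem_image.1 hy
      obtain ⟨-, -, h1, h2, -⟩ := keyfacts x hx
      exact Finset.mem_sigma.2 ⟨h1, h2⟩
    · intro y _ _; exact hgnonneg y
  set F : Finset ℕ → ℝ :=
    fun S => (∏ p ∈ S, b p) * ∏ q ∈ P \ S, (a q ^ 2 + 1) with hF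
  have step5 : ∑ y ∈ Sig, g y = ∑ S ∈ P.powerset, (∑ p ∈ S, Real.log p) * F S := by
    rw [hSig, Finset.sum_sigma]
    refine Finset.sum_congr rfl fun S hS => ?_
    have h1 : ∑ T ∈ (P \ S).powerset, g ⟨S, T⟩
        = (∑ T ∈ (P \ S).powerset, ∏ p ∈ T, a p ^ 2)
            * ((∏ p ∈ S, b p) * ∑ p ∈ S, Real.log p) := by
      rw [Finset.sum_mul]
    have h2 : ∑ T ∈ (P \ S).powerset, ∏ p ∈ T, a p ^ 2 = ∏ q ∈ P \ S, (a q ^ 2 + 1) := by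
      rw [Finset.prod_add]
      simp
    rw [h1, h2, hF]
    ring
  have step6 : ∑ S ∈ P.powerset, (∑ p ∈ S, Real.log p) * F S
      = ∑ p ∈ P, Real.log p
          * ∑ S ∈ P.powerset.filter (fun S => p ∈ S), F S := by
    have h1 : ∀ S ∈ P.powerset, (∑ p ∈ S, Real.log p) * F S
        = ∑ p ∈ P, (if p ∈ S then Real.log p * F S else 0) := by
      intro S hS
      rw [Finset.sum_ite_mem, Finset.inter_eq_right.2 (Finset.mem_powerset.1 hS),
        Finset.sum_mul]
    rw [Finset.sum_congr rfl h1, Finset.sum_comm]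
    refine Finset.sum_congr rfl fun p hp => ?_
    rw [Finset.mul_sum, ← Finset.sum_filter]
  have step7 : ∀ p ∈ P, ∑ S ∈ P.powerset.filter (fun S => p ∈ S), F S
      = b p * ∏ q ∈ P.erase p, (b q + (a q ^ 2 + 1)) := by
    intro p hp
    have hbij : ∑ S ∈ P.powerset.filter (fun S => p ∈ S), F S
        = ∑ T ∈ (P.erase p).powerset, F (insert p T) := by
      refine Finset.sum_nbij' (fun S => S.erase p) (fun T => insert p T) ?_ ?_ ?_ ?_ ?_
      · intro S hS
        rw [Finset.mem_filter, Finset.mem_powerset] at hS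
        exact Finset.mem_powerset.2 (Finset.erase_subset_erase p hS.1)
      · intro T hT
        rw [Finset.mem_powerset] at hT
        refine Finset.mem_filter.2 ⟨Finset.mem_powerset.2 ?_, Finset.mem_insert_self p T⟩
        exact Finset.insert_subset hp (hT.trans (Finset.erase_subset p P))
      · intro S hS
        rw [Finset.mem_filter] at hS
        exact Finset.insert_erase hS.2
      · intro T hT
        rw [Finset.mem_powerset] at hT
        exact Finset.erase_insert fun hpT => (Finset.mem_erase.1 (hT hpT)).1 rfl
      · intro S hS
        rw [Finset.mem_filter] at hS
        rw [Finset.insert_erase hS.2]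
    rw [hbij]
    have hval : ∀ T ∈ (P.erase p).powerset, F (insert p T)
        = b p * ((∏ q ∈ T, b q) * ∏ q ∈ (P.erase p) \ T, (a q ^ 2 + 1)) := by
      intro T hT
      rw [Finset.mem_powerset] at hT
      have hpT : p ∉ T := fun hpT => (Finset.mem_erase.1 (hT hpT)).1 rfl
      have hsd : P \ insert p T = (P.erase p) \ T := by
        ext x
        simp only [Finset.mem_sdiff, Finset.mem_insert, Finset.mem_erase]
        tauto
      simp only [hF]
      rw [Finset.prod_insert hpT, hsd]
      ring
    rw [Finset.sum_congr rfl hval, ← Finset.mul_sum, (Finset.prod_add b (fun q => a q ^ 2 + 1) (P.erase p)).symm]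
  have hQ1 : resQ1 M = ∏ q ∈ P, (1 + a q ^ 2 + b q) := resQ1_eq_prod M
  have hQ1nonneg : (0:ℝ) ≤ ∏ q ∈ P, (1 + a q ^ 2 + b q) := by
    rw [← hQ1]; linarith [one_le_resQ1 M]
  have step8 : ∀ p ∈ P, ∏ q ∈ P.erase p, (b q + (a q ^ 2 + 1))
      ≤ ∏ q ∈ P, (1 + a q ^ 2 + b q) := by
    intro p hp
    have h1 : ∏ q ∈ P.erase p, (b q + (a q ^ 2 + 1))
        = ∏ q ∈ P.erase p, (1 + a q ^ 2 + b q) :=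
      Finset.prod_congr rfl fun q _ => by ring
    rw [h1, ← Finset.mul_prod_erase P _ hp]
    have hnn : 0 ≤ ∏ q ∈ P.erase p, (1 + a q ^ 2 + b q) :=
      Finset.prod_nonneg fun q _ => by nlinarith [hb_nonneg q, sq_nonneg (a q)]
    exact le_mul_of_one_le_left hnn (by nlinarith [hb_nonneg p, sq_nonneg (a p)])
  have hval2 : ∀ p ∈ P, Real.log p * b p = resL M * (p:ℝ)⁻¹ := by
    intro p hp
    obtain ⟨hprime, hpne⟩ := mem_resP.1 (hP ▸ hp)
    have hcond : resL M ^ 2 ≤ (p:ℝ) ∧ (p:ℝ) ≤ Real.exp (Real.log (resL M) ^ 2) := by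
      by_contra hc
      exact hpne (by rw [resFp, if_neg hc])
    have hfp : resFp M p = resL M / (Real.sqrt p * Real.log p) := by
      rw [resFp, if_pos hcond]
    have hlogp : 0 < Real.log p := Real.log_pos (by exact_mod_cast hprime.one_lt)
    have hpp : (0:ℝ) < p := by exact_mod_cast hprime.pos
    have hsp : 0 < Real.sqrt p := Real.sqrt_pos.2 hpp
    have key : Real.sqrt p * Real.sqrt p = (p:ℝ) := Real.mul_self_sqrt hpp.le
    have hbp : b p = resFp M p / Real.sqrt p := rfl
    rw [hbp, hfp]
    field_simp
    linear_combination (-(resL M)) * key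
  have step9 : ∑ p ∈ P, Real.log p * b p ≤ resL M * (3 + Real.log (resL M) ^ 2) := by
    set K := ⌈Real.exp (Real.log (resL M) ^ 2)⌉₊ with hK
    have hPK : P ⊆ Finset.Icc 1 K := by
      intro p hp
      have h1 := mem_resP.1 (hP ▸ hp)
      have h2 : p ∈ Finset.range (K + 1) := (Finset.mem_filter.1 (hP ▸ hp)).1
      rw [Finset.mem_range] at h2
      exact Finset.mem_Icc.2 ⟨h1.1.one_lt.le.trans' (by norm_num), by omega⟩
    have h1 : ∑ p ∈ P, Real.log p * b p = resL M * ∑ p ∈ P, (p:ℝ)⁻¹ := by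
      rw [Finset.mul_sum]
      exact Finset.sum_congr rfl hval2
    have h2 : ∑ p ∈ P, ((p:ℝ))⁻¹ ≤ ∑ d ∈ Finset.Icc 1 K, ((d:ℝ))⁻¹ :=
      Finset.sum_le_sum_of_subset_of_nonneg hPK fun d _ _ => by positivity
    have h3 : ∑ d ∈ Finset.Icc 1 K, ((d:ℝ))⁻¹ = (harmonic K : ℝ) := by
      rw [harmonic_eq_sum_Icc]
      push_cast
      rfl
    have h4 : (harmonic K : ℝ) ≤ 1 + Real.log K := harmonic_le_one_add_log K
    have hexp1 : (1:ℝ) ≤ Real.exp (Real.log (resL M) ^ 2) :=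
      Real.one_le_exp (sq_nonneg _)
    have h5 : Real.log K ≤ 1 + Real.log (resL M) ^ 2 := by
      have hK1 : (1:ℝ) ≤ (K:ℝ) := by
        have : (1:ℕ) ≤ K := Nat.one_le_iff_ne_zero.2 (by
          have := Nat.ceil_pos.2 (lt_of_lt_of_le one_pos hexp1)
          omega)
        exact_mod_cast this
      have h6 : (K:ℝ) ≤ Real.exp (Real.log (resL M) ^ 2) + 1 :=
        (Nat.ceil_lt_add_one (by positivity)).le
      have h7 : (K:ℝ) ≤ 2 * Real.exp (Real.log (resL M) ^ 2) := by linarith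
      calc Real.log K ≤ Real.log (2 * Real.exp (Real.log (resL M) ^ 2)) :=
            Real.log_le_log (by linarith) h7
        _ = Real.log 2 + Real.log (resL M) ^ 2 := by
            rw [Real.log_mul (by norm_num) (Real.exp_ne_zero _), Real.log_exp]
        _ ≤ 1 + Real.log (resL M) ^ 2 := by
            have := Real.log_le_sub_one_of_pos (by norm_num : (0:ℝ) < 2)
            linarith
    have hL : 0 ≤ resL M := Real.sqrt_nonneg _
    calc ∑ p ∈ P, Real.log p * b p = resL M * ∑ p ∈ P, (p:ℝ)⁻¹ := h1
      _ ≤ resL M * (3 + Real.log (resL M) ^ 2) := by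
          apply mul_le_mul_of_nonneg_left _ hL
          calc ∑ p ∈ P, ((p:ℝ))⁻¹ ≤ (harmonic K : ℝ) := h3 ▸ h2
            _ ≤ 1 + Real.log K := h4
            _ ≤ 3 + Real.log (resL M) ^ 2 := by linarith
  calc ∑ n ∈ Finset.Icc 1 M, ∑ u ∈ Finset.Icc 1 (M / n),
        resF M u * resF M (n * u) * Real.log n / Real.sqrt n
      = ∑ x ∈ Dom, term x := step1
    _ = ∑ x ∈ Dom.filter (fun x => term x ≠ 0), term x := (Finset.sum_filter_ne_zero _).symm
    _ = ∑ y ∈ (Dom.filter (fun x => term x ≠ 0)).image e, g y := step3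
    _ ≤ ∑ y ∈ Sig, g y := step4
    _ = ∑ S ∈ P.powerset, (∑ p ∈ S, Real.log p) * F S := step5
    _ = ∑ p ∈ P, Real.log p * ∑ S ∈ P.powerset.filter (fun S => p ∈ S), F S := step6
    _ = ∑ p ∈ P, Real.log p * (b p * ∏ q ∈ P.erase p, (b q + (a q ^ 2 + 1))) :=
        Finset.sum_congr rfl fun p hp => by rw [step7 p hp]
    _ ≤ ∑ p ∈ P, Real.log p * b p * ∏ q ∈ P, (1 + a q ^ 2 + b q) := by
        refine Finset.sum_le_sum fun p hp => ?_
        rw [mul_assoc]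
        exact mul_le_mul_of_nonneg_left
          (mul_le_mul_of_nonneg_left (step8 p hp) (hb_nonneg p))
          (Real.log_natCast_nonneg p)
    _ = (∑ p ∈ P, Real.log p * b p) * ∏ q ∈ P, (1 + a q ^ 2 + b q) :=
        (Finset.sum_mul _ _ _).symm
    _ ≤ resL M * (3 + Real.log (resL M) ^ 2) * ∏ q ∈ P, (1 + a q ^ 2 + b q) :=
        mul_le_mul_of_nonneg_right step9 hQ1nonneg
    _ = resL M * (3 + Real.log (resL M) ^ 2) * resQ1 M := by rw [← hQ1]
/-- With the resonator coefficients `f = f_M` as defined, for every `ε > 0`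
one has `Σ_{nu ≤ M} f(u) f(nu) (log n)/√n ≪_ε Q₁ (log M)^{1/2+ε}` as `M → ∞`. -/
theorem resonator_log_weighted_sum (ε : ℝ) (hε : 0 < ε) :
    (fun M : ℕ =>
        ∑ n ∈ Finset.Icc 1 M, ∑ u ∈ Finset.Icc 1 (M / n),
          resF M u * resF M (n * u) * Real.log n / Real.sqrt n)
      =O[atTop] fun M : ℕ => resQ1 M * Real.log M ^ ((1 : ℝ) / 2 + ε) := by
  rw [Asymptotics.isBigO_iff]
  refine ⟨1, ?_⟩
  have hreal : ∀ᶠ x : ℝ in atTop,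
      Real.sqrt (x * Real.log x) * (3 + Real.log (Real.sqrt (x * Real.log x)) ^ 2)
        ≤ x ^ ((1:ℝ)/2 + ε) := by
    have h1 : ∀ᶠ x : ℝ in atTop, 1 ≤ Real.log x :=
      Real.tendsto_log_atTop.eventually_ge_atTop 1
    have h2 : ∀ᶠ x : ℝ in atTop, 4 * Real.log x ^ 3 ≤ x ^ ε := by
      have h := isLittleO_log_rpow_rpow_atTop (3:ℝ) hε
      have h' := h.def (by norm_num : (0:ℝ) < 1/4)
      filter_upwards [h', h1, eventually_ge_atTop (1:ℝ)] with x hx hx1 hx2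
      rw [Real.norm_eq_abs, Real.norm_eq_abs] at hx
      have hlx : 0 ≤ Real.log x := by linarith
      have hxpow : 0 ≤ x ^ ε := Real.rpow_nonneg (by linarith) ε
      have e1 : Real.log x ^ (3:ℝ) = Real.log x ^ (3:ℕ) := by
        rw [show ((3:ℝ)) = ((3:ℕ):ℝ) by norm_num, Real.rpow_natCast]
      rw [abs_of_nonneg (by rw [e1]; positivity), abs_of_nonneg hxpow] at hx
      rw [e1] at hx
      linarith
    filter_upwards [h1, h2, eventually_ge_atTop (1:ℝ)] with x hlog h4 hx1
    have hx0 : (0:ℝ) < x := by linarith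
    have hxl : (0:ℝ) ≤ x * Real.log x := by nlinarith
    have h5 : Real.log (Real.sqrt (x * Real.log x)) ≤ Real.log x := by
      rw [Real.log_sqrt hxl, Real.log_mul (by linarith) (by linarith)]
      have hll : Real.log (Real.log x) ≤ Real.log x :=
        (Real.log_le_sub_one_of_pos (by linarith)).trans (by linarith)
      linarith [Real.log_nonneg hx1]
    have h5' : 0 ≤ Real.log (Real.sqrt (x * Real.log x)) := by
      rw [Real.log_sqrt hxl]
      have hge : (1:ℝ) ≤ x * Real.log x := by nlinarith
      linarith [Real.log_nonneg hge]
    have h6 : Real.log (Real.sqrt (x * Real.log x)) ^ 2 ≤ Real.log x ^ 2 :=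
      pow_le_pow_left₀ h5' h5 2
    have h7 : Real.sqrt (x * Real.log x) ≤ Real.sqrt x * Real.log x := by
      rw [Real.sqrt_mul hx0.le]
      refine mul_le_mul_of_nonneg_left ?_ (Real.sqrt_nonneg x)
      calc Real.sqrt (Real.log x) ≤ Real.sqrt (Real.log x ^ 2) :=
            Real.sqrt_le_sqrt (by nlinarith)
        _ = Real.log x := Real.sqrt_sq (by linarith)
    have hfac : 0 ≤ 3 + Real.log (Real.sqrt (x * Real.log x)) ^ 2 := by positivity
    calc Real.sqrt (x * Real.log x) * (3 + Real.log (Real.sqrt (x * Real.log x)) ^ 2)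
        ≤ (Real.sqrt x * Real.log x) * (3 + Real.log x ^ 2) := by
          exact mul_le_mul h7 (by linarith [h6]) hfac
            (mul_nonneg (Real.sqrt_nonneg x) (by linarith))
      _ ≤ Real.sqrt x * (4 * Real.log x ^ 3) := by
          have hcube : Real.log x ≤ Real.log x ^ 3 := by nlinarith
          have hmid : Real.log x * (3 + Real.log x ^ 2) ≤ 4 * Real.log x ^ 3 := by nlinarith
          calc (Real.sqrt x * Real.log x) * (3 + Real.log x ^ 2)
              = Real.sqrt x * (Real.log x * (3 + Real.log x ^ 2)) := by ring
            _ ≤ _ := mul_le_mul_of_nonneg_left hmid (Real.sqrt_nonneg x)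
      _ ≤ Real.sqrt x * x ^ ε := mul_le_mul_of_nonneg_left h4 (Real.sqrt_nonneg x)
      _ = x ^ ((1:ℝ)/2 + ε) := by
          rw [Real.sqrt_eq_rpow, ← Real.rpow_add hx0]
  have htend : Tendsto (fun M : ℕ => Real.log M) atTop atTop :=
    Real.tendsto_log_atTop.comp tendsto_natCast_atTop_atTop
  filter_upwards [htend.eventually hreal, htend.eventually (eventually_ge_atTop (0:ℝ))]
    with M h1 hlM
  have h1' : resL M * (3 + Real.log (resL M) ^ 2) ≤ Real.log M ^ ((1:ℝ)/2 + ε) := by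
    simpa [resL] using h1
  have hLHS0 : 0 ≤ ∑ n ∈ Finset.Icc 1 M, ∑ u ∈ Finset.Icc 1 (M / n),
      resF M u * resF M (n * u) * Real.log n / Real.sqrt n := by
    refine Finset.sum_nonneg fun n _ => Finset.sum_nonneg fun u _ => ?_
    exact div_nonneg (mul_nonneg (mul_nonneg (resF_nonneg M u) (resF_nonneg M (n * u)))
      (Real.log_natCast_nonneg n)) (Real.sqrt_nonneg _)
  have hQ1 := one_le_resQ1 M
  have hrpow : 0 ≤ Real.log M ^ ((1:ℝ)/2 + ε) := Real.rpow_nonneg hlM _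
  rw [Real.norm_eq_abs, Real.norm_eq_abs, abs_of_nonneg hLHS0,
    abs_of_nonneg (by nlinarith), one_mul]
  calc ∑ n ∈ Finset.Icc 1 M, ∑ u ∈ Finset.Icc 1 (M / n),
        resF M u * resF M (n * u) * Real.log n / Real.sqrt n
      ≤ resL M * (3 + Real.log (resL M) ^ 2) * resQ1 M := resonator_main_bound M
    _ ≤ Real.log M ^ ((1:ℝ)/2 + ε) * resQ1 M :=
        mul_le_mul_of_nonneg_right h1' (by linarith)
    _ = resQ1 M * Real.log M ^ ((1:ℝ)/2 + ε) := mul_comm _ _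
end
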